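/- Let n be an odd natural number. Then every sequence of length 2^{Ω(n)} in Z_n has a nonempty subsequence of consecutive terms which is a U(n)-weighted zero-sum sequence; that is, C_{U(n)}(n) ≤ 2^{Ω(n)}. -/

import Mathlib

/-- A list `L` over `ZMod n` is an `A`-weighted zero-sum sequence if there are weights
`a₁, …, a_k ∈ A` (one per term) with `a₁x₁ + ⋯ + a_kx_k = 0`. -/
def IsWeightedZeroSum {n : ℕ} (A : Set (ZMod n)) (L : List (ZMod n)) : Prop :=
  ∃ a : List (ZMod n), a.length = L.length ∧ (∀ w ∈ a, w ∈ A) ∧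
    (List.zipWith (· * ·) a L).sum = 0

/-- `L` has a nonempty subsequence of consecutive terms which is an
`A`-weighted zero-sum sequence. -/
def HasConsecWZS {n : ℕ} (A : Set (ZMod n)) (L : List (ZMod n)) : Prop :=
  ∃ l₁ l₂ l₃ : List (ZMod n), L = l₁ ++ l₂ ++ l₃ ∧ l₂ ≠ [] ∧ IsWeightedZeroSum A l₂


lemma countP_one_split {α : Type*} (p : α → Bool) :
    ∀ L : List α, L.countP p = 1 →
      ∃ X z Y, L = X ++ z :: Y ∧ p z = true ∧ X.countP p = 0 ∧ Y.countP p = 0 := by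
  intro L
  induction L with
  | nil => simp
  | cons a l ih =>
    intro h
    rw [List.countP_cons] at h
    by_cases hpa : p a = true
    · rw [if_pos hpa] at h
      exact ⟨[], a, l, rfl, hpa, by simp, by omega⟩
    · rw [if_neg hpa] at h
      obtain ⟨X, z, Y, rfl, h1, h2, h3⟩ := ih (by omega)
      exact ⟨a :: X, z, Y, rfl, h1, by rw [List.countP_cons]; simp [hpa, h2], h3⟩

lemma countP_two_split {α : Type*} (p : α → Bool) :
    ∀ L : List α, 2 ≤ L.countP p →
      ∃ X u M v Y, L = X ++ u :: (M ++ v :: Y) ∧ p u = true ∧ p v = true := by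
  intro L
  induction L with
  | nil => simp
  | cons a l ih =>
    intro h
    rw [List.countP_cons] at h
    by_cases hpa : p a = true
    · rw [if_pos hpa] at h
      have h1 : 0 < l.countP p := by omega
      rw [List.countP_pos_iff] at h1
      obtain ⟨v, hv, hpv⟩ := h1
      obtain ⟨M, Y, rfl⟩ := List.append_of_mem hv
      exact ⟨[], a, M, v, Y, rfl, hpa, hpv⟩
    · rw [if_neg hpa] at h
      obtain ⟨X, u, M, v, Y, rfl, h1, h2⟩ := ih (by omega)
      exact ⟨a :: X, u, M, v, Y, rfl, h1, h2⟩

lemma comb_lemma {α ι : Type*} [DecidableEq ι] (P : ι → α → Bool) :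
    ∀ (k : ℕ) (s : Finset ι), s.card ≤ k → ∀ L : List α, 2 ^ k ≤ L.length →
      ∃ l₁ l₂ l₃ : List α, L = l₁ ++ l₂ ++ l₃ ∧ l₂ ≠ [] ∧
        ∀ i ∈ s, l₂.countP (P i) ≠ 1 := by
  intro k
  induction k with
  | zero =>
    intro s hs L hL
    have hs0 : s = ∅ := Finset.card_eq_zero.mp (Nat.le_zero.mp hs)
    subst hs0
    match L, hL with
    | x :: l, _ => exact ⟨[], [x], l, by simp, by simp, by simp⟩
  | succ k ih =>
    intro s hs L hL
    have hpow : 2 ^ (k + 1) = 2 ^ k + 2 ^ k := by rw [pow_succ]; ring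
    by_cases hall : ∀ i ∈ s, L.countP (P i) ≠ 1
    · refine ⟨[], L, [], by simp, ?_, hall⟩
      have : 0 < L.length := lt_of_lt_of_le (pow_pos (by norm_num) _) hL
      exact List.ne_nil_of_length_pos this
    · push_neg at hall
      obtain ⟨i₀, hi₀s, hc⟩ := hall
      obtain ⟨X, z, Y, rfl, hpz, hX0, hY0⟩ := countP_one_split (P i₀) _ hc
      have hscard : (s.erase i₀).card ≤ k := by
        rw [Finset.card_erase_of_mem hi₀s]; omega
      have hlen : (X ++ z :: Y).length = X.length + Y.length + 1 := by
        simp; omega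
      rcases le_or_gt (2 ^ k) X.length with hX | hX
      · obtain ⟨m₁, m₂, m₃, hXeq, hne, hgood⟩ := ih (s.erase i₀) hscard X hX
        refine ⟨m₁, m₂, m₃ ++ z :: Y, by rw [hXeq]; simp, hne, ?_⟩
        intro i hi
        by_cases hii : i = i₀
        · subst hii
          have hsub : m₂.Sublist X := by
            rw [hXeq]
            simp [List.append_assoc]
          have := (List.Sublist.countP_le (p := P i) hsub).trans_eq hX0
          omega
        · exact hgood i (Finset.mem_erase.mpr ⟨hii, hi⟩)
      · have hY : 2 ^ k ≤ Y.length := by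
          rw [hlen] at hL; omega
        obtain ⟨m₁, m₂, m₃, hYeq, hne, hgood⟩ := ih (s.erase i₀) hscard Y hY
        refine ⟨X ++ z :: m₁, m₂, m₃, by rw [hYeq]; simp, hne, ?_⟩
        intro i hi
        by_cases hii : i = i₀
        · subst hii
          have hsub : m₂.Sublist Y := by
            rw [hYeq]
            simp [List.append_assoc]
          have := (List.Sublist.countP_le (p := P i) hsub).trans_eq hY0
          omega
        · exact hgood i (Finset.mem_erase.mpr ⟨hii, hi⟩)

lemma isUnit_ppow_iff {p e : ℕ} (hp : p.Prime) (he : 1 ≤ e) (x : ZMod (p ^ e)) :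
    IsUnit x ↔ ¬ p ∣ x.val := by
  haveI : NeZero (p ^ e) := ⟨pow_ne_zero _ hp.ne_zero⟩
  conv_lhs => rw [← ZMod.natCast_zmod_val x]
  rw [ZMod.isUnit_iff_coprime, Nat.coprime_pow_right_iff he, Nat.coprime_comm,
    Nat.Prime.coprime_iff_not_dvd hp]

lemma exists_sum_two_units {p e : ℕ} (hp : p.Prime) (hp2 : p ≠ 2) (he : 1 ≤ e)
    (T : ZMod (p ^ e)) : ∃ γ δ : ZMod (p ^ e), IsUnit γ ∧ IsUnit δ ∧ γ + δ = T := by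
  haveI : NeZero (p ^ e) := ⟨pow_ne_zero _ hp.ne_zero⟩
  by_cases h : IsUnit (T - 1)
  · exact ⟨1, T - 1, isUnit_one, h, by ring⟩
  · have hd1 : p ∣ (T - 1).val := by rw [isUnit_ppow_iff hp he] at h; exact not_not.mp h
    have h2u : IsUnit (2 : ZMod (p ^ e)) := by
      have h2 : ((2 : ℕ) : ZMod (p ^ e)) = 2 := by push_cast; ring
      rw [← h2, ZMod.isUnit_iff_coprime, Nat.coprime_pow_right_iff he]
      exact (Nat.coprime_primes Nat.prime_two hp).mpr (Ne.symm hp2)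
    have hdu : IsUnit (T - 2) := by
      rw [isUnit_ppow_iff hp he]
      intro hd2
      obtain ⟨s, hs⟩ := hd1
      obtain ⟨r, hr⟩ := hd2
      have e1 : (T - 1 : ZMod (p ^ e)) = ((p * s : ℕ) : ZMod (p ^ e)) := by
        rw [← hs, ZMod.natCast_zmod_val]
      have e2 : (T - 2 : ZMod (p ^ e)) = ((p * r : ℕ) : ZMod (p ^ e)) := by
        rw [← hr, ZMod.natCast_zmod_val]
      have key : (1 : ZMod (p ^ e)) = (p : ZMod (p ^ e)) * ((s : ZMod (p ^ e)) - r) := by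
        have h12 : (T - 1) - (T - 2) = ((p * s : ℕ) : ZMod (p ^ e)) - ((p * r : ℕ) : ZMod (p ^ e)) := by
          rw [← e1, ← e2]
        push_cast at h12
        linear_combination h12
      have hpu : IsUnit ((p : ℕ) : ZMod (p ^ e)) := IsUnit.of_mul_eq_one _ key.symm
      rw [ZMod.isUnit_iff_coprime] at hpu
      exact ((Nat.Prime.coprime_iff_not_dvd hp).mp hpu) (dvd_pow_self p (by omega))
    exact ⟨2, T - 2, h2u, hdu, by ring⟩

lemma zipWith_replicate_one_mul {R : Type*} [Monoid R] :
    ∀ l : List R, List.zipWith (· * ·) (List.replicate l.length 1) l = l := by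
  intro l
  induction l with
  | nil => simp
  | cons a l ih => simpa [List.replicate_succ] using ih

lemma sum_zipWith_mul_const {R : Type*} [CommRing R] (c : R) :
    ∀ a b : List R,
      (List.zipWith (fun w y => w * (c * y)) a b).sum
        = c * (List.zipWith (· * ·) a b).sum := by
  intro a
  induction a with
  | nil => intro b; simp
  | cons w a ih =>
    intro b
    cases b with
    | nil => simp
    | cons y b =>
      simp only [List.zipWith_cons_cons, List.sum_cons, ih]
      ring

def GoodW (n : ℕ) (L : List (ZMod n)) : Prop :=
  ∃ a : List (ZMod n), a.length = L.length ∧ (∀ w ∈ a, IsUnit w) ∧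
    (List.zipWith (· * ·) a L).sum = 0

lemma countP_cast {n q : ℕ} [NeZero n] (h : q ∣ n) (d : ℕ) (hd : d ∣ q) (L : List (ZMod n)) :
    (L.map (ZMod.castHom h (ZMod q))).countP (fun x => decide (¬ d ∣ x.val)) =
      L.countP (fun x => decide (¬ d ∣ x.val)) := by
  haveI : NeZero q := ⟨fun h0 => (NeZero.ne n) (Nat.eq_zero_of_zero_dvd (h0 ▸ h))⟩
  rw [List.countP_map]
  apply List.countP_congr
  intro x hx
  have hv : ((ZMod.castHom h (ZMod q)) x).val = x.val % q := by
    rw [ZMod.castHom_apply, ← ZMod.natCast_val x, ZMod.val_natCast]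
  have hiff : (d ∣ ((ZMod.castHom h (ZMod q)) x).val) ↔ d ∣ x.val := by
    rw [hv]; exact Nat.dvd_mod_iff hd
  simp only [Function.comp_apply, decide_eq_true_eq]
  exact not_congr hiff |>.symm |>.symm |> fun t => ⟨fun a => t.mp a, fun a => t.mpr a⟩

lemma ringHom_zipWith_sum {R S : Type*} [CommRing R] [CommRing S] (f : R →+* S) :
    ∀ (a L : List R),
      f ((List.zipWith (· * ·) a L).sum) = (List.zipWith (· * ·) (a.map f) (L.map f)).sum := by
  intro a
  induction a with
  | nil => intro L; simp
  | cons w a ih =>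
    intro L
    cases L with
    | nil => simp
    | cons x L => simp [ih]

lemma goodW_mul {q m n : ℕ} [NeZero n] (hqm : q * m = n) (hco : Nat.Coprime q m)
    (L : List (ZMod n))
    (hq : GoodW q (L.map (ZMod.castHom (show q ∣ n from ⟨m, hqm.symm⟩) (ZMod q))))
    (hm : GoodW m (L.map (ZMod.castHom (show m ∣ n from ⟨q, by rw [← hqm]; ring⟩) (ZMod m)))) :
    GoodW n L := by
  haveI : NeZero q := ⟨fun h0 => (NeZero.ne n) (by rw [← hqm, h0, zero_mul])⟩
  haveI : NeZero m := ⟨fun h0 => (NeZero.ne n) (by rw [← hqm, h0, mul_zero])⟩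
  set fq := ZMod.castHom (show q ∣ n from ⟨m, hqm.symm⟩) (ZMod q) with hfq
  set fm := ZMod.castHom (show m ∣ n from ⟨q, by rw [← hqm]; ring⟩) (ZMod m) with hfm
  obtain ⟨aq, hlq, huq, hsq⟩ := hq
  obtain ⟨am, hlm, hum, hsm⟩ := hm
  rw [List.length_map] at hlq hlm
  set crt : ZMod q → ZMod m → ZMod n :=
    fun u v => ((Nat.chineseRemainder hco u.val v.val : ℕ) : ZMod n) with hcrt
  set a : List (ZMod n) := (aq.zip am).map (fun w => crt w.1 w.2) with ha
  have hlen : a.length = L.length := by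
    simp [ha, List.length_zip, hlq, hlm]
  have hvalq : ∀ (x : ZMod n), fq x = ((x.val : ℕ) : ZMod q) := by
    intro x; rw [hfq, ZMod.castHom_apply, ZMod.natCast_val]
  have hvalm : ∀ (x : ZMod n), fm x = ((x.val : ℕ) : ZMod m) := by
    intro x; rw [hfm, ZMod.castHom_apply, ZMod.natCast_val]
  have hcrtq : ∀ u v, fq (crt u v) = u := by
    intro u v
    have h1 : ((Nat.chineseRemainder hco u.val v.val : ℕ) : ZMod q) = ((u.val : ℕ) : ZMod q) :=
      (ZMod.natCast_eq_natCast_iff _ _ _).mpr (Nat.chineseRemainder hco u.val v.val).2.1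
    rw [hcrt, map_natCast fq, h1, ZMod.natCast_zmod_val]
  have hcrtm : ∀ u v, fm (crt u v) = v := by
    intro u v
    have h1 : ((Nat.chineseRemainder hco u.val v.val : ℕ) : ZMod m) = ((v.val : ℕ) : ZMod m) :=
      (ZMod.natCast_eq_natCast_iff _ _ _).mpr (Nat.chineseRemainder hco u.val v.val).2.2
    rw [hcrt, map_natCast fm, h1, ZMod.natCast_zmod_val]
  have hunit : ∀ u v, IsUnit u → IsUnit v → IsUnit (crt u v) := by
    intro u v hu hv
    have hcop : ((crt u v).val).Coprime (q * m) := by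
      rw [Nat.coprime_mul_iff_right]
      constructor
      · have := hu
        rw [← hcrtq u v, hvalq, ZMod.isUnit_iff_coprime] at this
        exact this
      · have := hv
        rw [← hcrtm u v, hvalm, ZMod.isUnit_iff_coprime] at this
        exact this
    rw [hqm] at hcop
    rw [← ZMod.natCast_zmod_val (crt u v), ZMod.isUnit_iff_coprime]
    exact hcop
  have hmapq : a.map fq = aq := by
    rw [ha, List.map_map]
    have h2 : ∀ w ∈ aq.zip am, (fq ∘ fun w => crt w.1 w.2) w = Prod.fst w :=
      fun w _ => hcrtq w.1 w.2
    rw [List.map_congr_left h2]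
    exact List.map_fst_zip (by omega)
  have hmapm : a.map fm = am := by
    rw [ha, List.map_map]
    have h2 : ∀ w ∈ aq.zip am, (fm ∘ fun w => crt w.1 w.2) w = Prod.snd w :=
      fun w _ => hcrtm w.1 w.2
    rw [List.map_congr_left h2]
    exact List.map_snd_zip (by omega)
  refine ⟨a, hlen, ?_, ?_⟩
  · intro w hw
    rw [ha] at hw
    obtain ⟨pr, hpr, rfl⟩ := List.mem_map.mp hw
    obtain ⟨h1, h2⟩ := List.of_mem_zip hpr
    exact hunit _ _ (huq _ h1) (hum _ h2)
  · set z := (List.zipWith (· * ·) a L).sum with hz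
    have zq : fq z = 0 := by rw [hz, ringHom_zipWith_sum, hmapq]; exact hsq
    have zm : fm z = 0 := by rw [hz, ringHom_zipWith_sum, hmapm]; exact hsm
    rw [hvalq, ZMod.natCast_eq_zero_iff] at zq
    rw [hvalm, ZMod.natCast_eq_zero_iff] at zm
    have : n ∣ z.val := by
      have hk : q * m ∣ z.val := hco.mul_dvd_of_dvd_of_dvd zq zm
      rwa [hqm] at hk
    rw [← ZMod.natCast_zmod_val z, ZMod.natCast_eq_zero_iff]
    exact this

lemma map_pmap_eq_self {α β : Type*} {Q : α → Prop} (f : β → α) (g : (w : α) → Q w → β)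
    (hg : ∀ w h, f (g w h) = w) :
    ∀ (l : List α) (h : ∀ w ∈ l, Q w), (l.pmap g h).map f = l := by
  intro l
  induction l with
  | nil => intro h; rfl
  | cons b l ihl =>
    intro h
    simp only [List.pmap, List.map_cons, hg]
    rw [ihl _]

lemma goodW_ppow {p : ℕ} (hp : p.Prime) (hp2 : p ≠ 2) :
    ∀ e (L : List (ZMod (p ^ e))),
      (∀ t, 1 ≤ t → t ≤ e → L.countP (fun x => decide (¬ p ^ t ∣ x.val)) ≠ 1) →
      GoodW (p ^ e) L := by
  intro e
  induction e with
  | zero =>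
    intro L _
    refine ⟨List.replicate L.length 1, List.length_replicate, ?_, ?_⟩
    · intro w hw; rw [List.eq_of_mem_replicate hw]; exact isUnit_one
    · haveI : Subsingleton (ZMod (p ^ 0)) := by rw [pow_zero]; infer_instance
      exact Subsingleton.elim _ _
  | succ e ih =>
    intro L hcount
    haveI : NeZero (p ^ (e + 1)) := ⟨pow_ne_zero _ hp.ne_zero⟩
    haveI : NeZero (p ^ e) := ⟨pow_ne_zero _ hp.ne_zero⟩
    have hc1 : L.countP (fun x => decide (¬ p ∣ x.val)) ≠ 1 := by
      have := hcount 1 le_rfl (by omega)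
      simpa [pow_one] using this
    rcases Nat.lt_or_ge (L.countP (fun x => decide (¬ p ∣ x.val))) 2 with hc | hc
    · -- all elements divisible by p
      have hc0 : L.countP (fun x => decide (¬ p ∣ x.val)) = 0 := by omega
      have hall : ∀ x ∈ L, p ∣ x.val := by
        intro x hx
        have := List.countP_eq_zero.mp hc0 x hx
        simpa using this
      set D : List (ZMod (p ^ e)) := L.map (fun x => ((x.val / p : ℕ) : ZMod (p ^ e))) with hD
      have hDcount : ∀ t, 1 ≤ t → t ≤ e → D.countP (fun y => decide (¬ p ^ t ∣ y.val)) ≠ 1 := by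
        intro t ht hte
        have heq : D.countP (fun y => decide (¬ p ^ t ∣ y.val))
            = L.countP (fun x => decide (¬ p ^ (t + 1) ∣ x.val)) := by
          rw [hD, List.countP_map]
          apply List.countP_congr
          intro x hx
          simp only [Function.comp_apply, decide_eq_true_eq]
          rw [ZMod.val_natCast, Nat.dvd_mod_iff (pow_dvd_pow p hte),
            Nat.dvd_div_iff_mul_dvd (hall x hx), ← pow_succ']
        rw [heq]
        exact hcount (t + 1) (by omega) (by omega)
      obtain ⟨a', hl', hu', hs'⟩ := ih D hDcount
      have hdvd : (p : ℕ) ^ e ∣ p ^ (e + 1) := pow_dvd_pow p (by omega)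
      have lift : ∀ w : ZMod (p ^ e), IsUnit w →
          ∃ w' : ZMod (p ^ (e + 1)), IsUnit w' ∧ ZMod.castHom hdvd (ZMod (p ^ e)) w' = w := by
        intro w hw
        obtain ⟨u, hu⟩ := ZMod.unitsMap_surjective hdvd hw.unit
        refine ⟨(u : ZMod (p ^ (e + 1))), u.isUnit, ?_⟩
        have h2 := congrArg Units.val hu
        simpa [ZMod.unitsMap] using h2
      choose g hg1 hg2 using lift
      set a : List (ZMod (p ^ (e + 1))) := a'.pmap (fun w hw => g w hw) hu' with hA
      have hAlen : a.length = a'.length := List.length_pmap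
      have hAcast : a.map (ZMod.castHom hdvd (ZMod (p ^ e))) = a' := by
        rw [hA]
        exact map_pmap_eq_self _ _ hg2 a' hu'
      set D' : List (ZMod (p ^ (e + 1))) :=
        L.map (fun x => ((x.val / p : ℕ) : ZMod (p ^ (e + 1)))) with hD'
      have hLD : D'.map (fun y => (p : ZMod (p ^ (e + 1))) * y) = L := by
        rw [hD', List.map_map]
        have hpt : ∀ x ∈ L, ((fun y => (p : ZMod (p ^ (e + 1))) * y) ∘
            fun x => ((x.val / p : ℕ) : ZMod (p ^ (e + 1)))) x = id x := by
          intro x hx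
          simp only [Function.comp_apply, id]
          rw [← Nat.cast_mul, Nat.mul_div_cancel' (hall x hx), ZMod.natCast_zmod_val]
        rw [List.map_congr_left hpt, List.map_id]
      refine ⟨a, by rw [hAlen, hl', hD, List.length_map], ?_, ?_⟩
      · intro w hw
        rw [hA] at hw
        obtain ⟨w', hw', heq⟩ := List.mem_pmap.mp hw
        exact heq ▸ hg1 _ _
      · have hs : (List.zipWith (· * ·) a L).sum
            = (p : ZMod (p ^ (e + 1))) * (List.zipWith (· * ·) a D').sum := by
          conv_lhs => rw [← hLD]
          rw [List.zipWith_map_right]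
          exact sum_zipWith_mul_const _ a D'
        set z := (List.zipWith (· * ·) a D').sum with hzdef
        have hz0 : (ZMod.castHom hdvd (ZMod (p ^ e))) z = 0 := by
          rw [hzdef, ringHom_zipWith_sum, hAcast]
          have hDD : D'.map (ZMod.castHom hdvd (ZMod (p ^ e))) = D := by
            rw [hD', hD, List.map_map]
            apply List.map_congr_left
            intro x hx
            simp [map_natCast]
          rw [hDD]
          exact hs'
        have h0 : ((z.val : ℕ) : ZMod (p ^ e)) = 0 := by
          rw [ZMod.natCast_val z]
          rw [ZMod.castHom_apply] at hz0
          exact hz0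
        have hzv : (p : ℕ) ^ e ∣ z.val := by
          rwa [ZMod.natCast_eq_zero_iff] at h0
        rw [hs]
        have hpz : (p : ZMod (p ^ (e + 1))) * z = ((p * z.val : ℕ) : ZMod (p ^ (e + 1))) := by
          rw [Nat.cast_mul, ZMod.natCast_zmod_val]
        rw [hpz, ZMod.natCast_eq_zero_iff]
        obtain ⟨s, hsv⟩ := hzv
        exact ⟨s, by rw [hsv]; ring⟩
    · -- at least two units
      obtain ⟨X, u, M, v, Y, hsplit, hpu, hpv⟩ := countP_two_split _ L hc
      have hu : IsUnit u := by
        rw [isUnit_ppow_iff hp (by omega)]; simpa using hpu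
      have hv : IsUnit v := by
        rw [isUnit_ppow_iff hp (by omega)]; simpa using hpv
      obtain ⟨γ, δ, hγ, hδ, hγδ⟩ := exists_sum_two_units hp hp2 (by omega)
        (-(X.sum + M.sum + Y.sum))
      refine ⟨List.replicate X.length 1 ++ (γ * ↑hu.unit⁻¹) ::
        (List.replicate M.length 1 ++ (δ * ↑hv.unit⁻¹) :: List.replicate Y.length 1),
        ?_, ?_, ?_⟩
      · rw [hsplit]; simp
      · intro w hw
        simp only [List.mem_append, List.mem_cons, List.mem_replicate] at hw
        rcases hw with (⟨_, rfl⟩ | rfl | ⟨_, rfl⟩ | rfl | ⟨_, rfl⟩) <;>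
          first
            | exact isUnit_one
            | exact hγ.mul (Units.isUnit _)
            | exact hδ.mul (Units.isUnit _)
      · rw [hsplit]
        rw [List.zipWith_append (by simp), List.zipWith_cons_cons,
          List.zipWith_append (by simp), List.zipWith_cons_cons,
          zipWith_replicate_one_mul, zipWith_replicate_one_mul, zipWith_replicate_one_mul]
        rw [List.sum_append, List.sum_cons, List.sum_append, List.sum_cons]
        have huu : (γ * ↑hu.unit⁻¹) * u = γ := by
          rw [mul_assoc, hu.val_inv_mul, mul_one]
        have hvv : (δ * ↑hv.unit⁻¹) * v = δ := by
          rw [mul_assoc, hv.val_inv_mul, mul_one]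
        rw [huu, hvv]
        linear_combination hγδ

lemma goodW_of_counts : ∀ n : ℕ, Odd n → ∀ L : List (ZMod n),
    (∀ p t : ℕ, p.Prime → 1 ≤ t → p ^ t ∣ n →
      L.countP (fun x => decide (¬ p ^ t ∣ x.val)) ≠ 1) →
    GoodW n L := by
  intro n
  induction n using Nat.strong_induction_on with
  | _ n ih =>
    intro hodd L hcount
    have hn0 : n ≠ 0 := by
      rintro rfl
      exact (Nat.not_odd_iff_even.mpr Even.zero) hodd
    haveI : NeZero n := ⟨hn0⟩
    by_cases h1 : n = 1
    · subst h1
      refine ⟨List.replicate L.length 1, by simp, ?_, Subsingleton.elim _ _⟩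
      intro w hw; rw [List.eq_of_mem_replicate hw]; exact isUnit_one
    · have hp : n.minFac.Prime := Nat.minFac_prime h1
      set p := n.minFac with hpdef
      have hp2 : p ≠ 2 := by
        intro h2
        obtain ⟨c, hc⟩ := n.minFac_dvd
        rw [show n.minFac = p from rfl, h2] at hc
        have := Nat.odd_iff.mp hodd
        omega
      set e := n.factorization p with he
      have he1 : 1 ≤ e := hp.factorization_pos_of_dvd hn0 n.minFac_dvd
      have hqm : p ^ e * ordCompl[p] n = n := Nat.ordProj_mul_ordCompl_eq_self n p
      set m := ordCompl[p] n with hm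
      have hco : Nat.Coprime (p ^ e) m := (Nat.coprime_ordCompl hp hn0).pow_left e
      apply goodW_mul hqm hco L
      · apply goodW_ppow hp hp2 e
        intro t ht hte
        rw [countP_cast ⟨m, hqm.symm⟩ (p ^ t) (pow_dvd_pow p hte)]
        exact hcount p t hp ht ((pow_dvd_pow p hte).trans ⟨m, hqm.symm⟩)
      · have hmdvd : m ∣ n := ⟨p ^ e, by rw [← hqm]; ring⟩
        have hmlt : m < n := by
          rw [hm]
          exact Nat.div_lt_self (Nat.pos_of_ne_zero hn0) (Nat.one_lt_pow (by omega) hp.one_lt)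
        have hmodd : Odd m := by
          have : Odd (p ^ e * m) := by rw [hqm]; exact hodd
          exact (Nat.odd_mul.mp this).2
        apply ih m hmlt hmodd
        intro r t hr ht hrt
        rw [countP_cast hmdvd (r ^ t) hrt]
        exact hcount r t hr ht (hrt.trans hmdvd)

/-- For odd `n`, every sequence of length `2^{Ω(n)}` in `Z_n` has a
nonempty consecutive `U(n)`-weighted zero-sum subsequence, i.e.
`C_{U(n)}(n) ≤ 2^{Ω(n)}`. -/
theorem C_units_upper_bound_odd (n : ℕ) (hodd : Odd n) :
    ∀ L : List (ZMod n), L.length = 2 ^ n.primeFactorsList.length →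
      HasConsecWZS {x : ZMod n | IsUnit x} L := by
  intro L hL
  classical
  have hn0 : n ≠ 0 := by
    rintro rfl
    exact (Nat.not_odd_iff_even.mpr Even.zero) hodd
  set k := n.primeFactorsList.length with hk
  set s : Finset ℕ := n.primeFactors.biUnion
    (fun p => (Finset.Icc 1 (n.factorization p)).image (fun t => p ^ t)) with hs
  have hcard : s.card ≤ k := by
    calc s.card
        ≤ ∑ p ∈ n.primeFactors,
            ((Finset.Icc 1 (n.factorization p)).image (fun t => p ^ t)).card :=
          Finset.card_biUnion_le
      _ ≤ ∑ p ∈ n.primeFactors, (Finset.Icc 1 (n.factorization p)).card :=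
          Finset.sum_le_sum (fun p _ => Finset.card_image_le)
      _ = ∑ p ∈ n.primeFactors, n.factorization p := by
          refine Finset.sum_congr rfl (fun p _ => ?_)
          rw [Nat.card_Icc]; omega
      _ = k := by
          have hmc := Multiset.toFinset_sum_count_eq (↑n.primeFactorsList : Multiset ℕ)
          simp only [Multiset.coe_count, Multiset.coe_card, List.toFinset_coe,
            Nat.toFinset_factors] at hmc
          rw [hk, ← hmc]
          exact Finset.sum_congr rfl (fun p _ => Nat.primeFactorsList_count_eq.symm)
  obtain ⟨l₁, l₂, l₃, hsplit, hne, hcounts⟩ :=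
    comb_lemma (fun d (x : ZMod n) => decide (¬ d ∣ x.val)) k s hcard L (le_of_eq hL.symm)
  refine ⟨l₁, l₂, l₃, hsplit, hne, ?_⟩
  have hgood : GoodW n l₂ := by
    apply goodW_of_counts n hodd l₂
    intro p t hp ht hdvd
    apply hcounts
    rw [hs]
    apply Finset.mem_biUnion.mpr
    refine ⟨p, Nat.mem_primeFactors.mpr ⟨hp, dvd_trans (dvd_pow_self p (by omega)) hdvd, hn0⟩, ?_⟩
    exact Finset.mem_image.mpr
      ⟨t, Finset.mem_Icc.mpr ⟨ht, (hp.pow_dvd_iff_le_factorization hn0).mp hdvd⟩, rfl⟩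
  obtain ⟨a, h1, h2, h3⟩ := hgood
  exact ⟨a, h1, fun w hw => h2 w hw, h3⟩
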